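/- Let p be a prime and a, m positive integers with gcd(a, m) = 1 and m ≥ 2. Then p^(a/m) (the positive real m-th root of p^a) is irrational and cannot be written as e·d^(1/n) for positive rationals e, d and n < m; that is, p^(a/m) is a reduced irrational. -/

import Mathlib

lemma ratA (p a k : ℕ) (hp : p.Prime) (hk : 2 ≤ k)
    (hco : Nat.gcd a k = 1) (r : ℚ) (hr : 0 < r) (h : r ^ k = (p : ℚ) ^ a) : False := by
  haveI : Fact p.Prime := ⟨hp⟩
  have hr0 : r ≠ 0 := ne_of_gt hr
  have h1 : padicValRat p (r ^ k) = k * padicValRat p r := padicValRat.pow r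
  have h2 : padicValRat p ((p : ℚ) ^ a) = a := by
    rw [padicValRat.pow (p : ℚ), padicValRat.self (by exact_mod_cast hp.one_lt), mul_one]
  have h3 : (k : ℤ) * padicValRat p r = a := by rw [← h1, h, h2]
  have hdvd' : k ∣ a := Int.ofNat_dvd.mp ⟨padicValRat p r, h3.symm⟩
  have : k ∣ 1 := hco ▸ Nat.dvd_gcd hdvd' dvd_rfl
  have := Nat.le_of_dvd one_pos this
  omega

theorem prime_power_root_reduced (p a m : ℕ) (hp : p.Prime) (ha : 0 < a)
    (hgcd : Nat.gcd a m = 1) (hm : 2 ≤ m) :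
    Irrational ((p : ℝ) ^ ((a : ℝ) / (m : ℝ))) ∧
    ∀ e d : ℚ, 0 < e → 0 < d → ∀ n : ℕ, n < m →
      (p : ℝ) ^ ((a : ℝ) / (m : ℝ)) ≠ (e : ℝ) * (d : ℝ) ^ ((1 : ℝ) / n) := by
  have hp0 : (0 : ℝ) < p := by exact_mod_cast hp.pos
  set x : ℝ := (p : ℝ) ^ ((a : ℝ) / (m : ℝ)) with hxdef
  have hx0 : 0 < x := Real.rpow_pos_of_pos hp0 _
  have hm0 : (m : ℝ) ≠ 0 := by positivity
  have hxm : x ^ m = (p : ℝ) ^ a := by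
    rw [hxdef, ← Real.rpow_natCast ((p:ℝ) ^ ((a:ℝ)/(m:ℝ))) m, ← Real.rpow_mul hp0.le,
      div_mul_cancel₀ _ hm0, Real.rpow_natCast]
  have hirr : Irrational x := by
    rw [Irrational]
    rintro ⟨q, hq⟩
    have hq0 : 0 < q := by exact_mod_cast hq ▸ hx0
    have : q ^ m = (p : ℚ) ^ a := by
      have : ((q ^ m : ℚ) : ℝ) = (((p : ℚ) ^ a : ℚ) : ℝ) := by push_cast; rw [hq, hxm]
      exact_mod_cast this
    exact ratA p a m hp hm hgcd q hq0 this
  refine ⟨hirr, ?_⟩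
  intro e d he hd n hn heq
  rcases Nat.eq_zero_or_pos n with hn0 | hn1
  · subst hn0
    simp only [Nat.cast_zero, div_zero, Real.rpow_zero, mul_one] at heq
    exact hirr ⟨e, heq.symm⟩
  -- n ≥ 1
  have hd0 : (0:ℝ) < (d:ℝ) := by exact_mod_cast hd
  have hn0' : (n : ℝ) ≠ 0 := by positivity
  have hxn : x ^ n = ((e ^ n * d : ℚ) : ℝ) := by
    rw [heq, mul_pow, ← Real.rpow_natCast ((d:ℝ) ^ ((1:ℝ)/n)) n, ← Real.rpow_mul hd0.le,
      one_div_mul_cancel hn0', Real.rpow_one]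
    push_cast; ring
  set q : ℚ := e ^ n * d with hqdef
  have hq0 : 0 < q := by positivity
  set A := Nat.gcdA n m
  set B := Nat.gcdB n m
  set g := Nat.gcd n m with hgdef
  have hbez : (g : ℤ) = n * A + m * B := Nat.gcd_eq_gcd_ab n m
  set r : ℚ := q ^ A * ((p : ℚ) ^ a) ^ B with hrdef
  have hpa0 : (0:ℚ) < (p:ℚ) ^ a := pow_pos (by exact_mod_cast hp.pos) a
  have hr0 : 0 < r := by
    apply mul_pos (zpow_pos hq0 _) (zpow_pos hpa0 _)
  have hrx : (r : ℝ) = x ^ (g : ℤ) := by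
    rw [hbez, zpow_add₀ hx0.ne', zpow_mul, zpow_mul, zpow_natCast, zpow_natCast, hxn, hxm, hrdef]
    push_cast; ring
  have hgdvd : g ∣ m := Nat.gcd_dvd_right n m
  have hgpos : 0 < g := Nat.gcd_pos_of_pos_left m hn1
  set k := m / g with hkdef
  have hgk : g * k = m := Nat.mul_div_cancel' hgdvd
  have hk2 : 2 ≤ k := by
    have hgn : g ≤ n := Nat.le_of_dvd hn1 (Nat.gcd_dvd_left n m)
    rcases Nat.lt_or_ge k 2 with h | h
    · interval_cases k <;> omega
    · exact h
  have hkdvd : k ∣ m := Nat.div_dvd_of_dvd hgdvd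
  have hcoak : Nat.gcd a k = 1 :=
    Nat.Coprime.coprime_dvd_right hkdvd hgcd
  have hrk : r ^ k = (p : ℚ) ^ a := by
    have : ((r ^ k : ℚ) : ℝ) = (((p:ℚ) ^ a : ℚ) : ℝ) := by
      push_cast
      rw [hrx, ← zpow_natCast (x ^ (g:ℤ)) k, ← zpow_mul]
      have : (g : ℤ) * (k : ℤ) = (m : ℤ) := by exact_mod_cast hgk
      rw [this, zpow_natCast, hxm]
    exact_mod_cast this
  exact ratA p a k hp hk2 hcoak r hr0 hrk
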